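/- For every nonzero integer m and every positive integer n, 25 * (sum over k from 1 to n of F_{mk}^4) = F_{2mn+m} (L_{2mn+m} + 4(-1)^{mn-1} L_m) / F_{2m} + 6n + 3. Equivalently (avoiding division), 25 F_{2m} * (sum over k from 1 to n of F_{mk}^4) = F_{2mn+m} (L_{2mn+m} + 4(-1)^{mn-1} L_m) + (6n+3) F_{2m}. -/

import Mathlib

def fibZ (n : ℤ) : ℤ :=
  if 0 ≤ n then (Nat.fib n.toNat : ℤ) else (-1) ^ ((-n).toNat + 1) * (Nat.fib (-n).toNat : ℤ)

def lucasZ (n : ℤ) : ℤ := fibZ (n - 1) + fibZ (n + 1)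

lemma fibZ_coe (k : ℕ) : fibZ k = Nat.fib k := by simp [fibZ]

lemma fibZ_neg_coe (k : ℕ) : fibZ (-(k:ℤ)) = (-1)^(k+1) * Nat.fib k := by
  rcases Nat.eq_zero_or_pos k with rfl | hk
  · simp [fibZ]
  · have h : ¬ (0 ≤ -(k:ℤ)) := by omega
    simp [fibZ, h]

lemma fibZ_add_two (n : ℤ) : fibZ (n + 2) = fibZ (n + 1) + fibZ n := by
  rcases le_or_gt 0 n with h | h
  · obtain ⟨k, rfl⟩ := Int.eq_ofNat_of_zero_le h
    have e1 : (k:ℤ) + 2 = ((k+2:ℕ):ℤ) := by push_cast; ring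
    have e2 : (k:ℤ) + 1 = ((k+1:ℕ):ℤ) := by push_cast; ring
    rw [e1, e2, fibZ_coe, fibZ_coe, fibZ_coe]
    have := Nat.fib_add_two (n := k)
    push_cast [this]
    ring
  · have : n = -1 ∨ n = -2 ∨ n ≤ -3 := by omega
    rcases this with rfl | rfl | h3
    · norm_num [fibZ]
    · norm_num [fibZ]; decide
    · obtain ⟨j, hj⟩ : ∃ j : ℕ, n = -((j:ℤ)) - 3 := ⟨(-n-3).toNat, by omega⟩
      subst hj
      have e0 : -((j:ℤ)) - 3 = -((j+3:ℕ):ℤ) := by push_cast; ring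
      have e1 : -((j:ℤ)) - 3 + 1 = -((j+2:ℕ):ℤ) := by push_cast; ring
      have e2 : -((j:ℤ)) - 3 + 2 = -((j+1:ℕ):ℤ) := by push_cast; ring
      rw [e1, e2, e0, fibZ_neg_coe, fibZ_neg_coe, fibZ_neg_coe]
      have hf : (Nat.fib (j+3) : ℤ) = Nat.fib (j+2) + Nat.fib (j+1) := by
        rw [show j+3 = (j+1)+2 from rfl, Nat.fib_add_two]
        simp only [show j+1+1 = j+2 from rfl]
        push_cast
        ring
      push_cast
      push_cast at hf
      rw [hf]
      ring

open Int (negOnePow)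

lemma negOnePow_coe (k : ℕ) : ((negOnePow (k:ℤ) : ℤˣ) : ℤ) = (-1)^k :=
  Int.coe_negOnePow_natCast k

lemma fibZ_neg (n : ℤ) : fibZ (-n) = -((negOnePow n : ℤ)) * fibZ n := by
  rcases le_or_gt 0 n with h | h
  · obtain ⟨k, rfl⟩ := Int.eq_ofNat_of_zero_le h
    rw [fibZ_neg_coe, fibZ_coe, negOnePow_coe]
    ring
  · obtain ⟨k, rfl⟩ : ∃ k : ℕ, n = -(k:ℤ) := ⟨(-n).toNat, by omega⟩
    rw [neg_neg, fibZ_coe, fibZ_neg_coe, Int.negOnePow_neg, negOnePow_coe]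
    ring_nf
    rw [mul_comm k 2, pow_mul]
    norm_num

lemma fibZ_zero : fibZ 0 = 0 := by norm_num [fibZ]
lemma fibZ_one : fibZ 1 = 1 := by norm_num [fibZ]
lemma fibZ_two : fibZ 2 = 1 := by norm_num [fibZ]; decide
lemma fibZ_neg_one : fibZ (-1) = 1 := by norm_num [fibZ]
lemma fibZ_neg_two : fibZ (-2) = -1 := by norm_num [fibZ]; decide

lemma lucasZ_add_two (n : ℤ) : lucasZ (n + 2) = lucasZ (n + 1) + lucasZ n := by
  unfold lucasZ
  have h1 := fibZ_add_two (n - 1)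
  have h2 := fibZ_add_two (n + 1)
  have e1 : n - 1 + 2 = n + 2 - 1 := by ring
  have e2 : n - 1 + 1 = n + 1 - 1 := by ring
  have e3 : n + 1 + 2 = n + 2 + 1 := by ring
  rw [e1, e2] at h1
  rw [e3] at h2
  linarith

lemma lucasZ_zero : lucasZ 0 = 2 := by
  rw [lucasZ, show (0:ℤ)-1 = -1 by norm_num, fibZ_neg_one, show (0:ℤ)+1 = 1 by norm_num, fibZ_one]; norm_num

lemma lucasZ_one : lucasZ 1 = 1 := by
  rw [lucasZ, show (1:ℤ)-1 = 0 by norm_num, fibZ_zero, show (1:ℤ)+1 = 2 by norm_num, fibZ_two]; norm_num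

lemma lucasZ_neg (n : ℤ) : lucasZ (-n) = (negOnePow n : ℤ) * lucasZ n := by
  rw [lucasZ, lucasZ, show -n - 1 = -(n+1) by ring, show -n + 1 = -(n-1) by ring,
    fibZ_neg, fibZ_neg, Int.negOnePow_succ, Int.negOnePow_sub, Int.negOnePow_one]
  push_cast
  ring

/-- A sequence satisfying the Fibonacci recurrence that vanishes at 0 and 1 vanishes. -/
lemma fib_rec_zero (g : ℤ → ℤ) (hrec : ∀ n : ℤ, g (n + 2) = g (n + 1) + g n)
    (h0 : g 0 = 0) (h1 : g 1 = 0) : ∀ n : ℤ, g n = 0 := by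
  have key : ∀ n : ℤ, g n = 0 ∧ g (n + 1) = 0 := by
    intro n
    induction n using Int.induction_on with
    | zero => exact ⟨h0, by simpa using h1⟩
    | succ k ih =>
      refine ⟨ih.2, ?_⟩
      have := hrec k
      rw [show (k:ℤ) + 1 + 1 = k + 2 by ring, this, ih.1, ih.2]
      ring
    | pred k ih =>
      have := hrec (-(k:ℤ) - 1)
      rw [show -(k:ℤ) - 1 + 2 = -k + 1 by ring, show -(k:ℤ) - 1 + 1 = -k by ring] at this
      constructor
      · have h' : g (-(k:ℤ) - 1) = g (-k + 1) - g (-k) := by linarith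
        rw [h', ih.1, ih.2]
        ring
      · rw [show -(k:ℤ) - 1 + 1 = -(k:ℤ) by ring]
        exact ih.1
  exact fun n => (key n).1

lemma negOnePow_sq (b : ℤ) : (negOnePow b : ℤ) * (negOnePow b : ℤ) = 1 := by
  rw [← Units.val_mul, Int.units_mul_self]
  rfl

lemma fib_mul_lucas (a b : ℤ) :
    fibZ a * lucasZ b = fibZ (a + b) + (negOnePow b : ℤ) * fibZ (a - b) := by
  have key : ∀ x : ℤ, fibZ x * lucasZ b - fibZ (x + b) - (negOnePow b : ℤ) * fibZ (x - b) = 0 := by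
    apply fib_rec_zero
    · intro n
      have h1 := fibZ_add_two n
      have h2 := fibZ_add_two (n + b)
      have h3 := fibZ_add_two (n - b)
      rw [show n+2+b = n+b+2 by ring, show n+2-b = n-b+2 by ring,
        show n+1+b = n+b+1 by ring, show n+1-b = n-b+1 by ring, h1, h2, h3]
      ring
    · rw [fibZ_zero, show (0:ℤ)+b = b by ring, show (0:ℤ)-b = -b by ring, fibZ_neg]
      linear_combination (fibZ b) * negOnePow_sq b
    · rw [fibZ_one, one_mul, show (1:ℤ)+b = b+1 by ring, show (1:ℤ)-b = -(b-1) by ring,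
        fibZ_neg, Int.negOnePow_sub, Int.negOnePow_one, lucasZ]
      push_cast
      linear_combination (-fibZ (b-1)) * negOnePow_sq b
  have h := key a
  linarith

lemma lucas_mul_lucas (a b : ℤ) :
    lucasZ a * lucasZ b = lucasZ (a + b) + (negOnePow b : ℤ) * lucasZ (a - b) := by
  have key : ∀ x : ℤ, lucasZ x * lucasZ b - lucasZ (x + b) - (negOnePow b : ℤ) * lucasZ (x - b) = 0 := by
    apply fib_rec_zero
    · intro n
      have h1 := lucasZ_add_two n
      have h2 := lucasZ_add_two (n + b)
      have h3 := lucasZ_add_two (n - b)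
      rw [show n+2+b = n+b+2 by ring, show n+2-b = n-b+2 by ring,
        show n+1+b = n+b+1 by ring, show n+1-b = n-b+1 by ring, h1, h2, h3]
      ring
    · rw [lucasZ_zero, show (0:ℤ)+b = b by ring, show (0:ℤ)-b = -b by ring, lucasZ_neg]
      linear_combination (-lucasZ b) * negOnePow_sq b
    · rw [lucasZ_one, one_mul, show (1:ℤ)+b = b+1 by ring, show (1:ℤ)-b = -(b-1) by ring,
        lucasZ_neg, Int.negOnePow_sub, Int.negOnePow_one]
      have h4 := lucasZ_add_two (b-1)
      rw [show b-1+2 = b+1 by ring, show b-1+1 = b by ring] at h4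
      push_cast
      linear_combination -h4 + (lucasZ (b-1)) * negOnePow_sq b
  have h := key a
  linarith

lemma five_fib (b : ℤ) : 5 * fibZ b = lucasZ (b + 1) + lucasZ (b - 1) := by
  have key : ∀ x : ℤ, 5 * fibZ x - lucasZ (x + 1) - lucasZ (x - 1) = 0 := by
    apply fib_rec_zero
    · intro n
      have h1 := fibZ_add_two n
      have h2 := lucasZ_add_two (n + 1)
      have h3 := lucasZ_add_two (n - 1)
      rw [show n+1+2 = n+3 by ring, show n+1+1 = n+2 by ring] at h2
      rw [show n-1+2 = n+1 by ring, show n-1+1 = n by ring] at h3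
      rw [show n+2+1 = n+3 by ring, show n+2-1 = n+1 by ring,
        show n+1+1 = n+2 by ring, show n+1-1 = n by ring, h1, h2, h3]
      ring
    · have h5 : lucasZ (0-1) = -1 := by
        rw [show (0:ℤ)-1 = -(1:ℤ) by ring, lucasZ_neg, Int.negOnePow_one, lucasZ_one]
        norm_num
      rw [fibZ_zero, show (0:ℤ)+1 = 1 by norm_num, lucasZ_one, h5]
      ring
    · have h2 := lucasZ_add_two 0
      rw [show (0:ℤ)+2 = 2 by norm_num, show (0:ℤ)+1 = 1 by norm_num, lucasZ_one, lucasZ_zero] at h2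
      rw [fibZ_one, show (1:ℤ)+1 = 2 by norm_num, show (1:ℤ)-1 = 0 by norm_num, h2, lucasZ_zero]
      ring
  have h := key b
  linarith

lemma five_fib_mul_fib (a b : ℤ) :
    5 * (fibZ a * fibZ b) = lucasZ (a + b) - (negOnePow b : ℤ) * lucasZ (a - b) := by
  have key : ∀ x : ℤ, 5 * (fibZ x * fibZ b) - lucasZ (x + b) + (negOnePow b : ℤ) * lucasZ (x - b) = 0 := by
    apply fib_rec_zero
    · intro n
      have h1 := fibZ_add_two n
      have h2 := lucasZ_add_two (n + b)
      have h3 := lucasZ_add_two (n - b)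
      rw [show n+2+b = n+b+2 by ring, show n+2-b = n-b+2 by ring,
        show n+1+b = n+b+1 by ring, show n+1-b = n-b+1 by ring, h1, h2, h3]
      ring
    · rw [fibZ_zero, show (0:ℤ)+b = b by ring, show (0:ℤ)-b = -b by ring, lucasZ_neg]
      linear_combination (lucasZ b) * negOnePow_sq b

    · rw [fibZ_one, show (1:ℤ)+b = b+1 by ring, show (1:ℤ)-b = -(b-1) by ring,
        lucasZ_neg, Int.negOnePow_sub, Int.negOnePow_one]
      have h4 := five_fib b
      push_cast
      linear_combination h4 - (lucasZ (b-1)) * negOnePow_sq b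
  have h := key a
  linarith

lemma pow4 (j : ℤ) :
    25 * fibZ j ^ 4 = lucasZ (4*j) - 4 * (negOnePow j : ℤ) * lucasZ (2*j) + 6 := by
  have h1 := five_fib_mul_fib j j
  rw [show j + j = 2*j by ring, show j - j = 0 by ring, lucasZ_zero] at h1
  have h2 := lucas_mul_lucas (2*j) (2*j)
  rw [show 2*j + 2*j = 4*j by ring, show 2*j - 2*j = 0 by ring, lucasZ_zero,
    Int.negOnePow_two_mul] at h2
  push_cast at h2
  linear_combination (norm := ring_nf)
    (5*fibZ j^2 + lucasZ (2*j) - 2*(negOnePow j : ℤ)) * h1 + h2 + 4 * negOnePow_sq j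

lemma step (m t : ℤ) :
    25 * fibZ (2*m) * fibZ (t+m)^4
      + fibZ (2*t+m) * (lucasZ (2*t+m) - 4 * (negOnePow t : ℤ) * lucasZ m)
    = fibZ (2*t+3*m) * (lucasZ (2*t+3*m) - 4 * ((negOnePow t : ℤ) * (negOnePow m : ℤ)) * lucasZ m)
      + 6 * fibZ (2*m) := by
  have hA := pow4 (t+m)
  rw [Int.negOnePow_add] at hA
  push_cast at hA
  have h2 := fib_mul_lucas (2*m) (4*t+4*m)
  rw [show 2*m - (4*t+4*m) = -(4*t+2*m) by ring, fibZ_neg,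
    Int.negOnePow_even (4*t+4*m) ⟨2*t+2*m, by ring⟩,
    Int.negOnePow_even (4*t+2*m) ⟨2*t+m, by ring⟩] at h2
  push_cast at h2
  have h3 := fib_mul_lucas (2*t+m) (2*t+m)
  rw [show 2*t+m - (2*t+m) = 0 by ring, fibZ_zero] at h3
  have h4 := fib_mul_lucas (2*t+3*m) (2*t+3*m)
  rw [show 2*t+3*m - (2*t+3*m) = 0 by ring, fibZ_zero] at h4
  have h5 := fib_mul_lucas (2*t+m) m
  have h6 := fib_mul_lucas (2*t+3*m) m
  have h7 := fib_mul_lucas (2*m) (2*t+2*m)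
  rw [show 2*m - (2*t+2*m) = -(2*t) by ring, fibZ_neg,
    Int.negOnePow_even (2*t+2*m) ⟨t+m, by ring⟩,
    Int.negOnePow_even (2*t) ⟨t, by ring⟩] at h7
  push_cast at h7
  have hb := negOnePow_sq m
  linear_combination (norm := ring_nf)
    fibZ (2*m) * hA + h2 - 4*(negOnePow t : ℤ)*(negOnePow m : ℤ)*h7 + h3
      - 4*(negOnePow t : ℤ)*h5 - h4 + 4*(negOnePow t : ℤ)*(negOnePow m : ℤ)*h6
      + 4*(negOnePow t : ℤ)*fibZ (2*t+2*m)*hb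

lemma main_aux (m : ℤ) (n : ℕ) :
    25 * fibZ (2 * m) * ∑ k ∈ Finset.Icc 1 n, fibZ (m * k) ^ 4
      = fibZ (2 * m * n + m) * (lucasZ (2 * m * n + m) + 4 * (negOnePow (m * n - 1) : ℤ) * lucasZ m)
        + (6 * n + 3) * fibZ (2 * m) := by
  induction n with
  | zero =>
    simp only [Nat.cast_zero, mul_zero, zero_add, zero_sub, Int.negOnePow_neg, Int.negOnePow_one]
    rw [show Finset.Icc 1 0 = ∅ by rfl, Finset.sum_empty]
    have h := fib_mul_lucas m m
    rw [show m + m = 2*m by ring, show m - m = 0 by ring, fibZ_zero] at h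
    push_cast
    linear_combination (norm := ring_nf) 3 * h
  | succ n ih =>
    rw [Finset.sum_Icc_succ_top (by omega : 1 ≤ n + 1)]
    have hst := step m (m * n)
    have hs1 : (negOnePow (m * n - 1) : ℤ) = -(negOnePow (m * n) : ℤ) := by
      rw [Int.negOnePow_sub, Int.negOnePow_one]
      push_cast
      ring
    have hs2 : (negOnePow (m * (n + 1 : ℕ) - 1) : ℤ)
        = -((negOnePow (m * n) : ℤ) * (negOnePow m : ℤ)) := by
      rw [show m * ((n:ℕ)+1 : ℕ) - 1 = (m * n + m) - 1 by push_cast; ring,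
        Int.negOnePow_sub, Int.negOnePow_add, Int.negOnePow_one]
      push_cast
      ring
    push_cast at hs2 ⊢
    rw [hs1] at ih
    rw [hs2, show 2 * m * ((n:ℤ) + 1) + m = 2 * (m * (n:ℤ)) + 3 * m by ring,
      show m * ((n:ℤ) + 1) = m * (n:ℤ) + m by ring]
    ring_nf at ih hst ⊢
    linarith [ih, hst]

theorem stmt9 (m : ℤ) (hm : m ≠ 0) (n : ℕ) (hn : 0 < n) :
    25 * fibZ (2 * m) * ∑ k ∈ Finset.Icc 1 n, fibZ (m * k) ^ 4
      = fibZ (2 * m * n + m) * (lucasZ (2 * m * n + m) + 4 * ((((-1 : ℤˣ) ^ (m * n - 1) : ℤˣ)) : ℤ) * lucasZ m)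
        + (6 * n + 3) * fibZ (2 * m) := by
  exact main_aux m n
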